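/- For every ω ∈ Ω_τ and every n ∈ ℕ there exists a unique residue class P⁽ⁿ⁾(ω) ∈ ℤ/2ⁿ⁺¹ℤ such that for every q ∈ ℤ whose class modulo 2ⁿ⁺¹ is P⁽ⁿ⁾(ω) one has ω(q) ∈ {x,y,z} and ω(q+1)ω(q+2)⋯ω(q+2ⁿ⁺¹−1) = p⁽ⁿ⁾. Moreover, the resulting map P⁽ⁿ⁾ : Ω_τ → ℤ/2ⁿ⁺¹ℤ is continuous (with respect to the product topology on Aᶻ restricted to Ω_τ and the discrete topology on ℤ/2ⁿ⁺¹ℤ) and equivariant with the shift: P⁽ⁿ⁾(Tω) = P⁽ⁿ⁾(ω) − 1 in ℤ/2ⁿ⁺¹ℤ. -/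

import Mathlib

/-- The four-letter alphabet `A = {a, x, y, z}`. -/
inductive A : Type
  | a | x | y | z
  deriving DecidableEq, Repr

/-- The substitution `τ : a ↦ axa, x ↦ y, y ↦ z, z ↦ x`. -/
def tau : A → List A
  | A.a => [A.a, A.x, A.a]
  | A.x => [A.y]
  | A.y => [A.z]
  | A.z => [A.x]

/-- The substitution `τ` extended to finite words by concatenation. -/
def tauW (w : List A) : List A := w.flatMap tau

/-- `pw n = τⁿ(a)`, a word of length `2^(n+1) - 1`. -/
def pw : ℕ → List A
  | 0 => [A.a]
  | n + 1 => tauW (pw n)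

/-- The fixed point `η` of `τ`: the unique one-sided infinite word having every
`τⁿ(a)` as a prefix.  (Since `pw (n+1)` has length `2^(n+2) - 1 > n`, reading its
`n`-th letter is well defined and independent of the choice of a large enough iterate.) -/
def eta (n : ℕ) : A := (pw (n + 1)).getD n A.a

/-- `w` is a (finite) factor of `η`. -/
def IsFactorEta (w : List A) : Prop :=
  ∃ i : ℕ, w = (List.range w.length).map (fun k => eta (i + k))

/-- `Ω_τ`: the set of two-sided sequences all of whose finite factors are factors of `η`. -/
def OmegaTau (ω : ℤ → A) : Prop :=
  ∀ (i : ℤ) (n : ℕ), IsFactorEta ((List.range n).map (fun k => ω (i + k)))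

instance : TopologicalSpace A := ⊥
instance : DiscreteTopology A := ⟨rfl⟩

/-- `P ∈ ℤ/2^(n+1)ℤ` is an `n`-partition of `ω`: for every `q` in the class `P`,
`ω(q) ∈ {x,y,z}` and `ω(q+1)⋯ω(q+2^(n+1)-1) = p⁽ⁿ⁾`. -/
def IsNPartition (n : ℕ) (ω : ℤ → A) (P : ZMod (2 ^ (n + 1))) : Prop :=
  ∀ q : ℤ, (q : ZMod (2 ^ (n + 1))) = P →
    ω q ∈ ({A.x, A.y, A.z} : Set A) ∧
    (List.range (2 ^ (n + 1) - 1)).map (fun k => ω (q + 1 + k)) = pw n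

/-! ### the cyclic map and the sequences `d`, `u` -/

def sig : A → A
  | A.a => A.a
  | A.x => A.y
  | A.y => A.z
  | A.z => A.x

def d (t : ℕ) : A :=
  if h : t % 2 = 0 then A.x else sig (d (t / 2))
decreasing_by exact Nat.div_lt_self (Nat.pos_of_ne_zero (by omega)) one_lt_two

def u (m : ℕ) : A := if m % 2 = 0 then A.a else d (m / 2)

def cn (n : ℕ) : A := sig^[n] A.x

lemma d_even {t : ℕ} (h : t % 2 = 0) : d t = A.x := by rw [d]; simp [h]

lemma d_odd (t : ℕ) : d (2 * t + 1) = sig (d t) := by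
  rw [d]
  have h1 : (2 * t + 1) % 2 = 1 := by omega
  have h2 : (2 * t + 1) / 2 = t := by omega
  simp [h1, h2]

lemma sig_ne_a {b : A} (h : b ≠ A.a) : sig b ≠ A.a := by cases b <;> simp_all [sig]

lemma sig_inj : Function.Injective sig := by
  intro a b h; cases a <;> cases b <;> simp_all [sig]

lemma d_ne_a (t : ℕ) : d t ≠ A.a := by
  induction t using Nat.strong_induction_on with
  | _ t ih =>
    rcases Nat.even_or_odd t with h | h
    · rw [d_even (Nat.even_iff.mp h)]; simp
    · obtain ⟨s, rfl⟩ := h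
      rw [d_odd]
      exact sig_ne_a (ih s (by omega))

lemma u_even {m : ℕ} (h : m % 2 = 0) : u m = A.a := by simp [u, h]

lemma u_odd {m : ℕ} (h : m % 2 = 1) : u m = d (m / 2) := by simp [u, h]

lemma u_ne_a_iff {m : ℕ} : u m ≠ A.a ↔ m % 2 = 1 := by
  rcases Nat.even_or_odd m with h | h
  · simp [u_even (Nat.even_iff.mp h), Nat.even_iff.mp h]
  · simp [u_odd (Nat.odd_iff.mp h), Nat.odd_iff.mp h, d_ne_a]

lemma cn_succ (n : ℕ) : cn (n + 1) = sig (cn n) := Function.iterate_succ_apply' sig n A.x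

lemma cn_ne_a (n : ℕ) : cn n ≠ A.a := by
  induction n with
  | zero => simp [cn]
  | succ n ih => rw [cn_succ]; exact sig_ne_a ih

/-- `d (2^m * (j+1) - 1) = sig^[m] (d j)` -/
lemma dpow : ∀ (m j : ℕ), d (2 ^ m * (j + 1) - 1) = sig^[m] (d j) := by
  intro m
  induction m with
  | zero => intro j; simp
  | succ m ih =>
    intro j
    have h : 2 ^ (m + 1) * (j + 1) - 1 = 2 * (2 ^ m * (j + 1) - 1) + 1 := by
      have h2 : 2 ^ (m + 1) * (j + 1) = 2 * (2 ^ m * (j + 1)) := by ring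
      have h3 : 1 ≤ 2 ^ m * (j + 1) := Nat.one_le_iff_ne_zero.mpr (by positivity)
      omega
    rw [h, d_odd, ih, Function.iterate_succ_apply' sig m]

/-- periodicity: `d (2^N + t) = d t` for `t < 2^N - 1` -/
lemma dper : ∀ (N t : ℕ), t < 2 ^ N - 1 → d (2 ^ N + t) = d t := by
  intro N
  induction N with
  | zero => intro t ht; omega
  | succ N ih =>
    intro t ht
    have hE : 2 ^ (N + 1) = 2 * 2 ^ N := by ring
    rcases Nat.even_or_odd t with h | h
    · have ht' := Nat.even_iff.mp h
      have h1 : (2 ^ (N + 1) + t) % 2 = 0 := by omega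
      rw [d_even h1, d_even ht']
    · obtain ⟨s, rfl⟩ := h
      have h1 : 2 ^ (N + 1) + (2 * s + 1) = 2 * (2 ^ N + s) + 1 := by ring
      rw [h1, d_odd, d_odd, ih s (by omega)]

lemma uper {N k : ℕ} (hk : k < 2 ^ (N + 1) - 1) : u (2 ^ (N + 1) + k) = u k := by
  have hE : 2 ^ (N + 1) = 2 * 2 ^ N := by ring
  rcases Nat.even_or_odd k with h | h
  · have h' := Nat.even_iff.mp h
    rw [u_even h', u_even (by omega)]
  · obtain ⟨s, rfl⟩ := h
    rw [u_odd (by omega), u_odd (by omega)]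
    have h1 : (2 * s + 1) / 2 = s := by omega
    have h2 : (2 ^ (N + 1) + (2 * s + 1)) / 2 = 2 ^ N + s := by omega
    rw [h1, h2]
    exact dper N s (by omega)

/-! ### structure of `pw` -/

lemma tauW_append (l1 l2 : List A) : tauW (l1 ++ l2) = tauW l1 ++ tauW l2 := by
  simp [tauW, List.flatMap_append]

lemma tauW_cons (b : A) (l : List A) : tauW (b :: l) = tau b ++ tauW l :=
  List.flatMap_cons ..

lemma tau_ne_a {b : A} (h : b ≠ A.a) : tau b = [sig b] := by
  cases b <;> simp_all [tau, sig]

lemma pw_succ : ∀ n, pw (n + 1) = pw n ++ cn n :: pw n := by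
  intro n
  induction n with
  | zero => decide
  | succ n ih =>
    show tauW (pw (n + 1)) = _
    rw [ih, tauW_append, tauW_cons, tau_ne_a (cn_ne_a n), ← cn_succ, ← ih]
    rfl

lemma pw_length : ∀ n, (pw n).length = 2 ^ (n + 1) - 1 := by
  intro n
  induction n with
  | zero => rfl
  | succ n ih =>
    rw [pw_succ]
    simp only [List.length_append, List.length_cons, ih]
    have : 2 ^ (n + 1 + 1) = 2 * 2 ^ (n + 1) := by ring
    have h3 : 1 ≤ 2 ^ (n + 1) := Nat.one_le_iff_ne_zero.mpr (by positivity)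
    omega

lemma u_getD : ∀ N m, m < 2 ^ (N + 1) - 1 → (pw N).getD m A.a = u m := by
  intro N
  induction N with
  | zero =>
    intro m hm
    have : m = 0 := by omega
    subst this
    rfl
  | succ N ih =>
    intro m hm
    have hlen : (pw N).length = 2 ^ (N + 1) - 1 := pw_length N
    have hE : 2 ^ (N + 1 + 1) = 2 * 2 ^ (N + 1) := by ring
    have h1 : 1 ≤ 2 ^ (N + 1) := Nat.one_le_iff_ne_zero.mpr (by positivity)
    rw [pw_succ]
    rcases lt_trichotomy m (2 ^ (N + 1) - 1) with h | h | h
    · rw [List.getD_append _ _ _ _ (by omega)]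
      exact ih m h
    · subst h
      rw [List.getD_append_right _ _ _ _ (by omega)]
      have : 2 ^ (N + 1) - 1 - (pw N).length = 0 := by omega
      rw [this]
      show cn N = u (2 ^ (N + 1) - 1)
      have hodd : (2 ^ (N + 1) - 1) % 2 = 1 := by omega
      rw [u_odd hodd]
      have : (2 ^ (N + 1) - 1) / 2 = 2 ^ N - 1 := by
        have : 2 ^ (N + 1) = 2 * 2 ^ N := by ring
        have : 1 ≤ 2 ^ N := Nat.one_le_iff_ne_zero.mpr (by positivity)
        omega
      rw [this]
      have := dpow N 0
      simp at this
      rw [this, d_even (by rfl)]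
      rfl
    · rw [List.getD_append_right _ _ _ _ (by omega)]
      have hk : m - (pw N).length = (m - 2 ^ (N + 1)) + 1 := by omega
      rw [hk, List.getD_cons_succ]
      rw [ih (m - 2 ^ (N + 1)) (by omega)]
      have h2 := uper (N := N) (k := m - 2 ^ (N + 1)) (by omega)
      rw [← h2]
      congr 1
      omega

lemma eta_eq_u (m : ℕ) : eta m = u m := by
  have h1 : m < 2 ^ m := Nat.lt_two_pow_self
  have h2 : 2 ^ (m + 1 + 1) = 4 * 2 ^ m := by ring
  exact u_getD (m + 1) m (by omega)

/-! ### good positions in the one-sided fixed point -/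

/-- `q` is a "good" position at level `n`: a non-`a` letter followed by `pw n`. -/
def Good (n q : ℕ) : Prop :=
  u q ≠ A.a ∧ ∀ k < 2 ^ (n + 1) - 1, u (q + 1 + k) = (pw n).getD k A.a

lemma usep (n i : ℕ) : u (2 ^ (n + 1) * (i + 1) - 1) = sig^[n] (d i) := by
  have hE : 2 ^ (n + 1) = 2 * 2 ^ n := by ring
  have h1 : 1 ≤ 2 ^ n := Nat.one_le_iff_ne_zero.mpr (by positivity)
  have h2 : 2 ^ (n + 1) * (i + 1) = 2 * (2 ^ n * (i + 1)) := by ring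
  have h3 : 1 ≤ 2 ^ n * (i + 1) := Nat.one_le_iff_ne_zero.mpr (by positivity)
  have hodd : (2 ^ (n + 1) * (i + 1) - 1) % 2 = 1 := by omega
  rw [u_odd hodd]
  have h4 : (2 ^ (n + 1) * (i + 1) - 1) / 2 = 2 ^ n * (i + 1) - 1 := by omega
  rw [h4, dpow]

lemma good_decomp {n q : ℕ} :
    Good (n + 1) q ↔ Good n q ∧ u (q + 2 ^ (n + 1)) = cn n ∧ Good n (q + 2 ^ (n + 1)) := by
  have hlen : (pw n).length = 2 ^ (n + 1) - 1 := pw_length n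
  have h1 : 1 ≤ 2 ^ (n + 1) := Nat.one_le_iff_ne_zero.mpr (by positivity)
  have hE : 2 ^ (n + 1 + 1) = 2 * 2 ^ (n + 1) := by ring
  constructor
  · rintro ⟨ha, hb⟩
    have hsep : u (q + 2 ^ (n + 1)) = cn n := by
      have := hb (2 ^ (n + 1) - 1) (by omega)
      rw [pw_succ, List.getD_append_right _ _ _ _ (by omega)] at this
      have he : 2 ^ (n + 1) - 1 - (pw n).length = 0 := by omega
      rw [he] at this
      have he2 : q + 1 + (2 ^ (n + 1) - 1) = q + 2 ^ (n + 1) := by omega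
      rw [he2] at this
      exact this
    refine ⟨⟨ha, fun k hk => ?_⟩, hsep, ?_⟩
    · have := hb k (by omega)
      rw [pw_succ, List.getD_append _ _ _ _ (by omega)] at this
      exact this
    · refine ⟨by rw [hsep]; exact cn_ne_a n, fun k hk => ?_⟩
      have := hb (2 ^ (n + 1) + k) (by omega)
      rw [pw_succ, List.getD_append_right _ _ _ _ (by omega)] at this
      have he : 2 ^ (n + 1) + k - (pw n).length = k + 1 := by omega
      rw [he, List.getD_cons_succ] at this
      have he2 : q + 1 + (2 ^ (n + 1) + k) = q + 2 ^ (n + 1) + 1 + k := by omega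
      rw [he2] at this
      exact this
  · rintro ⟨⟨ha, hb⟩, hsep, ⟨-, hc⟩⟩
    refine ⟨ha, fun k hk => ?_⟩
    rw [pw_succ]
    rcases lt_trichotomy k (2 ^ (n + 1) - 1) with h | h | h
    · rw [List.getD_append _ _ _ _ (by omega)]
      exact hb k h
    · subst h
      rw [List.getD_append_right _ _ _ _ (by omega)]
      have he : 2 ^ (n + 1) - 1 - (pw n).length = 0 := by omega
      rw [he]
      have he2 : q + 1 + (2 ^ (n + 1) - 1) = q + 2 ^ (n + 1) := by omega
      rw [he2]
      exact hsep
    · rw [List.getD_append_right _ _ _ _ (by omega)]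
      have he : k - (pw n).length = (k - 2 ^ (n + 1)) + 1 := by omega
      rw [he, List.getD_cons_succ]
      have he2 : q + 1 + k = q + 2 ^ (n + 1) + 1 + (k - 2 ^ (n + 1)) := by omega
      rw [he2]
      exact hc (k - 2 ^ (n + 1)) (by omega)

/-- Every position `≡ -1 (mod 2^(n+1))` is good. -/
lemma L1 : ∀ n i, Good n (2 ^ (n + 1) * (i + 1) - 1) := by
  intro n
  induction n with
  | zero =>
    intro i
    constructor
    · rw [u_ne_a_iff]; omega
    · intro k hk
      have hk0 : k = 0 := by omega
      subst hk0
      have e0 : (2:ℕ) ^ (0 + 1) = 2 := by norm_num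
      show u (2 ^ (0 + 1) * (i + 1) - 1 + 1 + 0) = A.a
      have he : 2 ^ (0 + 1) * (i + 1) - 1 + 1 + 0 = 2 * (i + 1) := by rw [e0]; omega
      rw [he, u_even (by omega)]
  | succ n ih =>
    intro i
    have h1 : 1 ≤ 2 ^ (n + 1) := Nat.one_le_iff_ne_zero.mpr (by positivity)
    rw [good_decomp]
    have e1 : 2 ^ (n + 1 + 1) * (i + 1) - 1 = 2 ^ (n + 1) * (2 * i + 1 + 1) - 1 := by
      have h : 2 ^ (n + 1 + 1) * (i + 1) = 2 ^ (n + 1) * (2 * i + 1 + 1) := by ring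
      omega
    have e2 : 2 ^ (n + 1 + 1) * (i + 1) - 1 + 2 ^ (n + 1) = 2 ^ (n + 1) * (2 * i + 2 + 1) - 1 := by
      have h : 2 ^ (n + 1) * (2 * i + 2 + 1) = 2 ^ (n + 1 + 1) * (i + 1) + 2 ^ (n + 1) := by ring
      have h2 : 1 ≤ 2 ^ (n + 1 + 1) * (i + 1) := Nat.one_le_iff_ne_zero.mpr (by positivity)
      omega
    refine ⟨?_, ?_, ?_⟩
    · rw [e1]; exact ih (2 * i + 1)
    · rw [e2]
      have := usep n (2 * i + 2)
      rw [this, d_even (by omega)]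
      rfl
    · rw [e2]; exact ih (2 * i + 2)

/-- Two consecutive good positions are aligned: `q ≡ -1 (mod 2^(n+1))`. -/
lemma L2 : ∀ n q, Good n q → Good n (q + 2 ^ (n + 1)) → ∃ j, q + 1 = 2 ^ (n + 1) * (j + 1) := by
  intro n
  induction n with
  | zero =>
    intro q hq _
    have := u_ne_a_iff.mp hq.1
    exact ⟨q / 2, by omega⟩
  | succ n ih =>
    intro q h1 h2
    have hp1 : 1 ≤ 2 ^ (n + 1) := Nat.one_le_iff_ne_zero.mpr (by positivity)
    rw [good_decomp] at h1 h2
    obtain ⟨j, hj⟩ := ih q h1.1 h1.2.2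
    -- separator at q + 2^(n+1):
    have e1 : q + 2 ^ (n + 1) = 2 ^ (n + 1) * (j + 1 + 1) - 1 := by
      have h : 2 ^ (n + 1) * (j + 1 + 1) = 2 ^ (n + 1) * (j + 1) + 2 ^ (n + 1) := by ring
      omega
    have s1 : sig^[n] (d (j + 1)) = cn n := by
      rw [← usep n (j + 1), ← e1]; exact h1.2.1
    have hd1 : d (j + 1) = A.x := Function.Injective.iterate sig_inj n s1
    -- separator at q + 2^(n+2) + 2^(n+1):
    have e2 : q + 2 ^ (n + 1 + 1) + 2 ^ (n + 1) = 2 ^ (n + 1) * (j + 3 + 1) - 1 := by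
      have h : 2 ^ (n + 1 + 1) = 2 * 2 ^ (n + 1) := by ring
      have h2 : 2 ^ (n + 1) * (j + 3 + 1) = 2 ^ (n + 1) * (j + 1) + 3 * 2 ^ (n + 1) := by ring
      omega
    have s2 : sig^[n] (d (j + 3)) = cn n := by
      rw [← usep n (j + 3), ← e2]; exact h2.2.1
    have hd3 : d (j + 3) = A.x := Function.Injective.iterate sig_inj n s2
    -- j must be odd
    rcases Nat.even_or_odd j with hj2 | hj2
    · exfalso
      obtain ⟨k, rfl⟩ := hj2
      have o1 : k + k + 1 = 2 * k + 1 := by ring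
      have o3 : k + k + 3 = 2 * (k + 1) + 1 := by ring
      rw [o1, d_odd] at hd1
      rw [o3, d_odd] at hd3
      have z1 : d k = A.z := by
        have := sig_inj (a₁ := d k) (a₂ := A.z) (by rw [hd1]; rfl)
        exact this
      have z2 : d (k + 1) = A.z := by
        exact sig_inj (a₁ := d (k + 1)) (a₂ := A.z) (by rw [hd3]; rfl)
      rcases Nat.even_or_odd k with hk | hk
      · rw [d_even (Nat.even_iff.mp hk)] at z1; exact absurd z1 (by decide)
      · have : (k + 1) % 2 = 0 := by have := Nat.odd_iff.mp hk; omega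
        rw [d_even this] at z2; exact absurd z2 (by decide)
    · obtain ⟨k, rfl⟩ := hj2
      refine ⟨k, ?_⟩
      have h : 2 ^ (n + 1 + 1) * (k + 1) = 2 ^ (n + 1) * (2 * k + 1 + 1) := by ring
      omega

/-! ### two-sided sequences -/

def GoodZ (n : ℕ) (ω : ℤ → A) (q : ℤ) : Prop :=
  ω q ≠ A.a ∧ ∀ k : ℕ, k < 2 ^ (n + 1) - 1 → ω (q + 1 + k) = (pw n).getD k A.a

def SG (n : ℕ) (ω : ℤ → A) (q : ℤ) : Prop :=
  GoodZ n ω q ∧ GoodZ n ω (q + (2 ^ (n + 1) : ℕ))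

lemma map_coe (f : ℤ → A) (K : ℕ) :
    (List.range K).map (fun k => f k) =
      (List.range K).map (fun k : ℕ => f (k : ℤ)) := by
  induction K with
  | zero => rfl
  | succ K ih => simp_all [List.range_succ]

/-- Extract a matching window from the factor condition. -/
lemma window {ω : ℤ → A} (hω : OmegaTau ω) (i : ℤ) (N : ℕ) :
    ∃ j : ℕ, ∀ k : ℕ, k < N → ω (i + k) = u (j + k) := by
  obtain ⟨j, hj⟩ := hω i N
  have hj' : (List.range N).map (fun z : ℤ => ω (i + z)) =
      List.map (fun k => eta (j + k))
        (List.range ((List.range N).map (fun z : ℤ => ω (i + z))).length) := hj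
  clear hj
  rw [map_coe] at hj'
  have hj := hj'
  simp only [List.length_map, List.length_range] at hj
  refine ⟨j, fun k hk => ?_⟩
  have h2 := congrArg (fun l => l.getD k A.a) hj
  simp only [List.getD_eq_getElem?_getD, List.getElem?_map, List.getElem?_range, hk,
    Option.map_some, Option.getD_some] at h2
  rw [h2]
  exact eta_eq_u _

/-- Transfer of goodness between a two-sided sequence and the fixed point. -/
lemma transfer {ω : ℤ → A} {i : ℤ} {N j : ℕ}
    (hw : ∀ k : ℕ, k < N → ω (i + k) = u (j + k))
    {n : ℕ} {q : ℤ} {t : ℕ} (hqt : q = i + (t : ℤ)) (h2 : t + 2 ^ (n + 1) ≤ N) :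
    GoodZ n ω q ↔ Good n (j + t) := by
  have hE1 : 1 ≤ 2 ^ (n + 1) := Nat.one_le_iff_ne_zero.mpr (by positivity)
  have hhead : ω q = u (j + t) := by rw [hqt]; exact hw t (by omega)
  have hbody : ∀ k : ℕ, k < 2 ^ (n + 1) - 1 → ω (q + 1 + k) = u (j + t + 1 + k) := by
    intro k hk
    have h3 := hw (t + 1 + k) (by omega)
    have e1 : i + ((t + 1 + k : ℕ) : ℤ) = q + 1 + k := by rw [hqt]; push_cast; ring
    have e2 : j + (t + 1 + k) = j + t + 1 + k := by ring
    rw [e1, e2] at h3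
    exact h3
  constructor
  · rintro ⟨ha, hb⟩
    exact ⟨hhead ▸ ha, fun k hk => by rw [← hbody k hk]; exact hb k hk⟩
  · rintro ⟨ha, hb⟩
    exact ⟨hhead ▸ ha, fun k hk => by rw [hbody k hk]; exact hb k hk⟩

/-- Existence of a strongly good position in `[0, 2^(n+1))`. -/
lemma exists_base {ω : ℤ → A} (hω : OmegaTau ω) (n : ℕ) :
    ∃ m : ℕ, m < 2 ^ (n + 1) ∧ SG n ω m := by
  set E := 2 ^ (n + 1) with hE
  have hE1 : 1 ≤ E := Nat.one_le_iff_ne_zero.mpr (by positivity)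
  obtain ⟨j, hw⟩ := window hω 0 (3 * E)
  set m := E - 1 - j % E with hm
  have hmod := Nat.mod_lt j (show 0 < E by omega)
  have hdm := Nat.div_add_mod j E
  have hjm : j + m + 1 = E * (j / E + 1) := by
    have h3 : E * (j / E + 1) = E * (j / E) + E := by ring
    omega
  have hjm2 : j + (m + E) + 1 = E * (j / E + 1 + 1) := by
    have h3 : E * (j / E + 1 + 1) = E * (j / E + 1) + E := by ring
    omega
  refine ⟨m, by omega, ?_, ?_⟩
  · rw [transfer hw (t := m) (by omega) (by omega)]
    have e : j + m = E * (j / E + 1) - 1 := by omega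
    rw [e]; exact L1 n (j / E)
  · rw [transfer hw (t := m + E) (by omega) (by omega)]
    have e : j + (m + E) = E * (j / E + 1 + 1) - 1 := by omega
    rw [e]; exact L1 n (j / E + 1)

/-- Any two strongly good positions are congruent mod `2^(n+1)`. -/
lemma SG_dvd {ω : ℤ → A} (hω : OmegaTau ω) (n : ℕ) {q q' : ℤ}
    (h : SG n ω q) (h' : SG n ω q') : ((2 ^ (n + 1) : ℕ) : ℤ) ∣ (q - q') := by
  set E := 2 ^ (n + 1) with hE
  have hE1 : 1 ≤ E := Nat.one_le_iff_ne_zero.mpr (by positivity)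
  set i := min q q' with hi
  set N := (max q q' - min q q').toNat + 3 * E with hN
  obtain ⟨j, hw⟩ := window hω i N
  set t := (q - i).toNat with ht
  set t' := (q' - i).toNat with ht'
  have hmin1 := min_le_left q q'
  have hmin2 := min_le_right q q'
  have hmax1 := le_max_left q q'
  have hmax2 := le_max_right q q'
  have hq : q = i + (t : ℤ) := by omega
  have hq' : q' = i + (t' : ℤ) := by omega
  have htN : t + 2 * E ≤ N := by omega
  have htN' : t' + 2 * E ≤ N := by omega
  have g1 : Good n (j + t) := (transfer hw hq (by omega)).mp h.1
  have g2 : Good n (j + t + E) := by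
    rw [Nat.add_assoc]
    exact (transfer hw (t := t + E) (q := q + (E : ℕ)) (by omega) (by omega)).mp h.2
  have g1' : Good n (j + t') := (transfer hw hq' (by omega)).mp h'.1
  have g2' : Good n (j + t' + E) := by
    rw [Nat.add_assoc]
    exact (transfer hw (t := t' + E) (q := q' + (E : ℕ)) (by omega) (by omega)).mp h'.2
  obtain ⟨a, ha⟩ := L2 n (j + t) g1 g2
  obtain ⟨b, hb⟩ := L2 n (j + t') g1' g2'
  refine ⟨(a : ℤ) - b, ?_⟩
  have hqq : (q - q' : ℤ) = (t : ℤ) - t' := by omega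
  have ha' : ((j : ℤ) + t) + 1 = (E : ℤ) * (a + 1) := by exact_mod_cast congrArg (Nat.cast : ℕ → ℤ) ha
  have hb' : ((j : ℤ) + t') + 1 = (E : ℤ) * (b + 1) := by exact_mod_cast congrArg (Nat.cast : ℕ → ℤ) hb
  linear_combination hqq + ha' - hb'

/-- Strong goodness propagates along the congruence class. -/
lemma SG_prop {ω : ℤ → A} (hω : OmegaTau ω) (n : ℕ) {q q' : ℤ}
    (h : SG n ω q) (hd : ((2 ^ (n + 1) : ℕ) : ℤ) ∣ (q' - q)) : SG n ω q' := by
  set E := 2 ^ (n + 1) with hE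
  have hE1 : 1 ≤ E := Nat.one_le_iff_ne_zero.mpr (by positivity)
  set i := min q q' with hi
  set N := (max q q' - min q q').toNat + 3 * E with hN
  obtain ⟨j, hw⟩ := window hω i N
  set t := (q - i).toNat with ht
  set t' := (q' - i).toNat with ht'
  have hmin1 := min_le_left q q'
  have hmin2 := min_le_right q q'
  have hmax1 := le_max_left q q'
  have hmax2 := le_max_right q q'
  have hq : q = i + (t : ℤ) := by omega
  have hq' : q' = i + (t' : ℤ) := by omega
  have htN : t + 2 * E ≤ N := by omega
  have htN' : t' + 2 * E ≤ N := by omega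
  have g1 : Good n (j + t) := (transfer hw hq (by omega)).mp h.1
  have g2 : Good n (j + t + E) := by
    rw [Nat.add_assoc]
    exact (transfer hw (t := t + E) (q := q + (E : ℕ)) (by omega) (by omega)).mp h.2
  obtain ⟨a, ha⟩ := L2 n (j + t) g1 g2
  have ha' : ((j : ℤ) + t) + 1 = (E : ℤ) * (a + 1) := by exact_mod_cast congrArg (Nat.cast : ℕ → ℤ) ha
  obtain ⟨k, hk⟩ := hd
  have hk' : ((j : ℤ) + t') + 1 = (E : ℤ) * (a + 1 + k) := by
    have h5 : (q' - q : ℤ) = (t' : ℤ) - t := by omega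
    linear_combination ha' + hk - h5
  have hEpos : (0 : ℤ) < (E : ℤ) := by exact_mod_cast hE1
  have hk1 : 1 ≤ (a : ℤ) + 1 + k := by
    by_contra hcon
    push_neg at hcon
    have h1 : (E : ℤ) * ((a : ℤ) + 1 + k) ≤ 0 :=
      mul_nonpos_of_nonneg_of_nonpos (le_of_lt hEpos) (by omega)
    have h2 : (0 : ℤ) < ((j : ℤ) + t') + 1 := by positivity
    omega
  set b := ((a : ℤ) + 1 + k - 1).toNat with hbdef
  have hbk : (a : ℤ) + 1 + k = (b : ℤ) + 1 := by omega
  rw [hbk] at hk'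
  have hb : j + t' + 1 = E * (b + 1) := by exact_mod_cast hk'
  have g1' : Good n (j + t') := by
    have e : j + t' = E * (b + 1) - 1 := by omega
    rw [e]; exact L1 n b
  have g2' : Good n (j + t' + E) := by
    have h3 : E * (b + 1 + 1) = E * (b + 1) + E := by ring
    have e : j + t' + E = E * (b + 1 + 1) - 1 := by omega
    rw [e]; exact L1 n (b + 1)
  constructor
  · exact (transfer hw hq' (by omega)).mpr g1'
  · rw [Nat.add_assoc] at g2'
    exact (transfer hw (t := t' + E) (q := q' + (E : ℕ)) (by omega) (by omega)).mpr g2'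

lemma ne_a_iff_mem {b : A} : b ≠ A.a ↔ b ∈ ({A.x, A.y, A.z} : Set A) := by
  cases b <;> simp

lemma map_range_eq_pw_iff {n : ℕ} (f : ℕ → A) :
    (List.range (2 ^ (n + 1) - 1)).map f = pw n ↔
      ∀ k, k < 2 ^ (n + 1) - 1 → f k = (pw n).getD k A.a := by
  constructor
  · intro h k hk
    have h2 := congrArg (fun l => l.getD k A.a) h
    simp only [List.getD_eq_getElem?_getD, List.getElem?_map, List.getElem?_range, hk,
      Option.map_some, Option.getD_some] at h2
    simpa [List.getD_eq_getElem?_getD] using h2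
  · intro h
    apply List.ext_getElem
    · simp [pw_length]
    · intro k h1 h2
      simp only [List.getElem_map, List.getElem_range]
      rw [h k (by simpa using h1)]
      exact List.getD_eq_getElem _ _ h2

lemma clause_iff {n : ℕ} {ω : ℤ → A} {q : ℤ} :
    (ω q ∈ ({A.x, A.y, A.z} : Set A) ∧
      (List.range (2 ^ (n + 1) - 1)).map (fun k => ω (q + 1 + k)) = pw n) ↔ GoodZ n ω q := by
  have hmc : ((List.range (2 ^ (n + 1) - 1)).map fun k => ω (q + 1 + k)) =
      (List.range (2 ^ (n + 1) - 1)).map (fun k : ℕ => ω (q + 1 + (k : ℤ))) := map_coe _ _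
  rw [hmc, map_range_eq_pw_iff, GoodZ, ne_a_iff_mem]

lemma int_cast_eq_iff_dvd (a b : ℤ) (N : ℕ) :
    ((a : ZMod N) = b) ↔ (N : ℤ) ∣ b - a := by
  rw [ZMod.intCast_eq_intCast_iff]
  exact Int.modEq_iff_dvd

lemma open_eval (p : ℤ) (s : Set A) : IsOpen {ω : {ω : ℤ → A // OmegaTau ω} | ω.1 p ∈ s} := by
  have hc : Continuous (fun ω : {ω : ℤ → A // OmegaTau ω} => ω.1 p) :=
    (continuous_apply p).comp continuous_subtype_val
  exact hc.isOpen_preimage s (isOpen_discrete s)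

lemma open_SG (n : ℕ) (q : ℤ) : IsOpen {ω : {ω : ℤ → A // OmegaTau ω} | SG n ω.1 q} := by
  have hG : ∀ r : ℤ, IsOpen {ω : {ω : ℤ → A // OmegaTau ω} | GoodZ n ω.1 r} := by
    intro r
    have he : {ω : {ω : ℤ → A // OmegaTau ω} | GoodZ n ω.1 r} =
        {ω : {ω : ℤ → A // OmegaTau ω} | ω.1 r ∈ ({A.a}ᶜ : Set A)} ∩
        ⋂ k ∈ Finset.range (2 ^ (n + 1) - 1),
          {ω : {ω : ℤ → A // OmegaTau ω} | ω.1 (r + 1 + k) ∈ ({(pw n).getD k A.a} : Set A)} := by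
      ext ω
      simp only [Set.mem_setOf_eq, Set.mem_inter_iff, Set.mem_iInter, Finset.mem_range,
        Set.mem_compl_iff, Set.mem_singleton_iff, GoodZ]
    rw [he]
    exact (open_eval r _).inter (isOpen_biInter_finset fun k _ => open_eval _ _)
  have he2 : {ω : {ω : ℤ → A // OmegaTau ω} | SG n ω.1 q} =
      {ω : {ω : ℤ → A // OmegaTau ω} | GoodZ n ω.1 q} ∩
      {ω : {ω : ℤ → A // OmegaTau ω} | GoodZ n ω.1 (q + (2 ^ (n + 1) : ℕ))} := rfl
  rw [he2]
  exact (hG q).inter (hG _)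

lemma goodZ_shift {n : ℕ} {ω : ℤ → A} {q : ℤ} :
    GoodZ n (fun m => ω (m + 1)) q ↔ GoodZ n ω (q + 1) := by
  constructor
  · rintro ⟨ha, hb⟩
    refine ⟨ha, fun k hk => ?_⟩
    have h3 : ω (q + 1 + k + 1) = (pw n).getD k A.a := hb k hk
    have e : q + 1 + (k : ℤ) + 1 = q + 1 + 1 + k := by ring
    rw [e] at h3
    exact h3
  · rintro ⟨ha, hb⟩
    refine ⟨ha, fun k hk => ?_⟩
    show ω (q + 1 + k + 1) = _
    have e : q + 1 + (k : ℤ) + 1 = q + 1 + 1 + k := by ring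
    rw [e]
    exact hb k hk

lemma sg_shift {n : ℕ} {ω : ℤ → A} {q : ℤ} :
    SG n (fun m => ω (m + 1)) q ↔ SG n ω (q + 1) := by
  have e : q + ((2 ^ (n + 1) : ℕ) : ℤ) + 1 = q + 1 + ((2 ^ (n + 1) : ℕ) : ℤ) := by ring
  constructor
  · rintro ⟨h1, h2⟩
    refine ⟨goodZ_shift.mp h1, ?_⟩
    have h3 := goodZ_shift.mp h2
    rwa [e] at h3
  · rintro ⟨h1, h2⟩
    refine ⟨goodZ_shift.mpr h1, goodZ_shift.mpr ?_⟩
    rwa [e]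

/-- **Existence and uniqueness of `n`-partitions**: every `ω ∈ Ω_τ` has a unique
`n`-partition `P⁽ⁿ⁾(ω)`, and the resulting map `P⁽ⁿ⁾ : Ω_τ → ℤ/2^(n+1)ℤ` is
continuous and shift-equivariant (`P⁽ⁿ⁾(Tω) = P⁽ⁿ⁾(ω) - 1`). -/
theorem n_partition_exists_unique_continuous_equivariant (n : ℕ) :
    ∃ P : {ω : ℤ → A // OmegaTau ω} → ZMod (2 ^ (n + 1)),
      (∀ ω : {ω : ℤ → A // OmegaTau ω}, IsNPartition n ω.1 (P ω)) ∧
      (∀ (ω : {ω : ℤ → A // OmegaTau ω}) (Q : ZMod (2 ^ (n + 1))),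
        IsNPartition n ω.1 Q → Q = P ω) ∧
      @Continuous {ω : ℤ → A // OmegaTau ω} (ZMod (2 ^ (n + 1))) _ ⊥ P ∧
      (∀ (ω : {ω : ℤ → A // OmegaTau ω}) (hT : OmegaTau (fun m => ω.1 (m + 1))),
        P ⟨fun m => ω.1 (m + 1), hT⟩ = P ω - 1) := by
  classical
  have hE1 : 1 ≤ 2 ^ (n + 1) := Nat.one_le_iff_ne_zero.mpr (by positivity)
  have hex : ∀ ω : {ω : ℤ → A // OmegaTau ω}, ∃ m : ℕ, m < 2 ^ (n + 1) ∧ SG n ω.1 m :=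
    fun ω => exists_base ω.2 n
  refine ⟨fun ω => ((Nat.find (hex ω) : ℕ) : ZMod (2 ^ (n + 1))), ?_, ?_, ?_, ?_⟩
  · -- IsNPartition
    intro ω q hq
    have hq' : ((q : ℤ) : ZMod (2 ^ (n + 1))) =
        (((Nat.find (hex ω) : ℤ)) : ZMod (2 ^ (n + 1))) := by
      push_cast
      exact hq
    have hd := (int_cast_eq_iff_dvd (Nat.find (hex ω)) q (2 ^ (n + 1))).mp hq'.symm
    have hsg := SG_prop ω.2 n (Nat.find_spec (hex ω)).2 hd
    exact clause_iff.mpr hsg.1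
  · -- uniqueness
    intro ω Q hQ
    obtain ⟨z, rfl⟩ := ZMod.intCast_surjective Q
    have h1 := clause_iff.mp (hQ z rfl)
    have hz2 : ((((z + ((2 ^ (n + 1) : ℕ) : ℤ)) : ℤ)) : ZMod (2 ^ (n + 1))) = (z : ZMod (2 ^ (n + 1))) := by
      push_cast
      simp only [add_eq_left]
      have h0 : ((2 ^ (n + 1) : ℕ) : ZMod (2 ^ (n + 1))) = 0 := ZMod.natCast_self _
      push_cast at h0
      exact h0
    have h2 := clause_iff.mp (hQ (z + ((2 ^ (n + 1) : ℕ) : ℤ)) hz2)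
    have hsg : SG n ω.1 z := ⟨h1, h2⟩
    have hd := SG_dvd ω.2 n hsg (Nat.find_spec (hex ω)).2
    have h9 := (int_cast_eq_iff_dvd z (Nat.find (hex ω)) (2 ^ (n + 1))).mpr
      (dvd_sub_comm.mp hd)
    simpa using h9
  · -- continuity
    haveI hdisc : @DiscreteTopology (ZMod (2 ^ (n + 1))) ⊥ := @DiscreteTopology.mk _ ⊥ rfl
    refine (@continuous_discrete_rng _ _ _ ⊥ hdisc _).mpr ?_
    intro c
    have hPre : (fun ω : {ω : ℤ → A // OmegaTau ω} =>
        ((Nat.find (hex ω) : ℕ) : ZMod (2 ^ (n + 1)))) ⁻¹' {c} =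
        ⋃ m ∈ Finset.range (2 ^ (n + 1)), ⋃ (_ : ((m : ℕ) : ZMod (2 ^ (n + 1))) = c),
          {ω : {ω : ℤ → A // OmegaTau ω} | SG n ω.1 (m : ℤ)} := by
      ext ω
      simp only [Set.mem_preimage, Set.mem_singleton_iff, Set.mem_iUnion, Finset.mem_range,
        Set.mem_setOf_eq]
      constructor
      · intro hc
        exact ⟨Nat.find (hex ω), (Nat.find_spec (hex ω)).1, hc, (Nat.find_spec (hex ω)).2⟩
      · rintro ⟨m, hm, hcast, hSG⟩
        have hd := SG_dvd ω.2 n hSG (Nat.find_spec (hex ω)).2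
        have h9 := (int_cast_eq_iff_dvd (m : ℤ) (Nat.find (hex ω)) (2 ^ (n + 1))).mpr
          (dvd_sub_comm.mp hd)
        rw [Int.cast_natCast, Int.cast_natCast] at h9
        rw [← h9]
        exact hcast
    rw [hPre]
    exact isOpen_biUnion fun m _ => isOpen_iUnion fun _ => open_SG n m
  · -- equivariance
    intro ω hT
    set ω' : {ω : ℤ → A // OmegaTau ω} := ⟨fun m => ω.1 (m + 1), hT⟩ with hω'
    show ((Nat.find (hex ω') : ℕ) : ZMod (2 ^ (n + 1))) = _
    have hsg : SG n ω.1 ((Nat.find (hex ω') : ℤ) + 1) := sg_shift.mp (Nat.find_spec (hex ω')).2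
    have hd := SG_dvd ω.2 n hsg (Nat.find_spec (hex ω)).2
    have h9 := (int_cast_eq_iff_dvd ((Nat.find (hex ω') : ℤ) + 1) (Nat.find (hex ω))
      (2 ^ (n + 1))).mpr (dvd_sub_comm.mp hd)
    push_cast at h9
    linear_combination h9
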